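/- There is an absolute constant C>0 such that, in the kernel setting of the context (unit speed, r>0, t>0, λ₋=|t−r|, λ₊=t+r, δ=min{r,1/2}), for every λ with λ₋<λ<λ₊ one has ∫₀¹ |∂_λ K₂(λ,τ;r,t)| dτ ≤ C / ( (rλ)^{1/2}(λ + r − t) ) whenever λ+r−t>0 (i.e. λ>λ₋ when t≥r). -/

import Mathlib

set_option maxHeartbeats 1000000


open Real intervalIntegral

noncomputable section

/-- `φ(λ; r, t) = arccos((r² + λ² − t²)/(2rλ))`. -/
def phiK (l r t : ℝ) : ℝ := Real.arccos ((r ^ 2 + l ^ 2 - t ^ 2) / (2 * r * l))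

/-- `K₁(λ, ψ; r, t) = 1/(2π √(t² − r² − λ² + 2rλ cos ψ))`. -/
def K1 (l ψ r t : ℝ) : ℝ :=
  1 / (2 * Real.pi * Real.sqrt (t ^ 2 - r ^ 2 - l ^ 2 + 2 * r * l * Real.cos ψ))

/-- `K₂(λ, τ; r, t) = 1/(2π √(2rλτ(1−τ)(2−(1−cos φ)τ)))`. -/
def K2 (l τ r t : ℝ) : ℝ :=
  1 / (2 * Real.pi *
    Real.sqrt (2 * r * l * τ * (1 - τ) * (2 - (1 - Real.cos (phiK l r t)) * τ)))

/-- `Ψ(λ, τ; r, t) = arccos(1 − (1 − cos φ)τ)`. -/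
def PsiK (l τ r t : ℝ) : ℝ := Real.arccos (1 - (1 - Real.cos (phiK l r t)) * τ)

namespace Stmt11Aux

open MeasureTheory Set

/-- The comparison kernel. -/
def fK (a b τ : ℝ) : ℝ :=
  (Real.sqrt (τ * (1 - τ)) * ((a * τ + b * (1 - τ)) * Real.sqrt (a * τ + b * (1 - τ))))⁻¹

lemma fK_nonneg (a b τ : ℝ) (ha : 0 < a) (hb : 0 < b) (hτ : τ ∈ Icc (0:ℝ) 1) :
    0 ≤ fK a b τ := by
  unfold fK
  obtain ⟨h0, h1⟩ := hτ
  have : 0 ≤ a * τ + b * (1 - τ) := by nlinarith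
  positivity

lemma fK_meas (a b : ℝ) : Measurable (fK a b) := by
  unfold fK
  fun_prop

/-- antiderivative for the model integrand -/
lemma hasDerivAt_F (a c τ : ℝ) (ha : 0 < a) (hc : 0 < c) (hτ : 0 < τ) :
    HasDerivAt (fun s => 2 * Real.sqrt s / (c * Real.sqrt (a * s + c)))
      ((Real.sqrt τ * ((a * τ + c) * Real.sqrt (a * τ + c)))⁻¹) τ := by
  have hac : 0 < a * τ + c := by positivity
  have h1 : HasDerivAt (fun s : ℝ => Real.sqrt s) (1 / (2 * Real.sqrt τ)) τ :=
    Real.hasDerivAt_sqrt hτ.ne'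
  have h2 : HasDerivAt (fun s : ℝ => a * s + c) a τ := by
    simpa using ((hasDerivAt_id τ).const_mul a).add_const c
  have h3 : HasDerivAt (fun s : ℝ => Real.sqrt (a * s + c)) (1 / (2 * Real.sqrt (a*τ+c)) * a) τ :=
    (Real.hasDerivAt_sqrt hac.ne').comp τ h2
  have h4 := (h1.const_mul 2).fun_div (h3.const_mul c)
    (by positivity : c * Real.sqrt (a*τ+c) ≠ 0)
  refine h4.congr_deriv (Eq.symm ?_)
  have hsτ : Real.sqrt τ ^ 2 = τ := Real.sq_sqrt hτ.le
  have hsac : Real.sqrt (a*τ+c) ^ 2 = a*τ+c := Real.sq_sqrt hac.le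
  have hsτ0 : Real.sqrt τ ≠ 0 := by positivity
  have hsac0 : Real.sqrt (a*τ+c) ≠ 0 := by positivity
  have hc0 : c ≠ 0 := hc.ne'
  field_simp
  rw [hsτ, hsac]
  ring

lemma fK_le (a b τ : ℝ) (ha : 0 < a) (hb : 0 < b) (h0 : 0 < τ) (h1 : τ ≤ 1/2) :
    fK a b τ ≤ Real.sqrt 2 * (Real.sqrt τ * ((a * τ + b/2) * Real.sqrt (a * τ + b/2)))⁻¹ := by
  have hP : 0 < a * τ + b/2 := by positivity
  have hPl : a * τ + b/2 ≤ a * τ + b * (1 - τ) := by nlinarith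
  have hQ : 0 < a * τ + b * (1 - τ) := lt_of_lt_of_le hP hPl
  have hs2 : Real.sqrt (1/2) ≤ Real.sqrt (1 - τ) := Real.sqrt_le_sqrt (by linarith)
  have key : Real.sqrt τ * ((a * τ + b/2) * Real.sqrt (a * τ + b/2)) / Real.sqrt 2
      ≤ Real.sqrt (τ * (1 - τ)) * ((a * τ + b * (1 - τ)) * Real.sqrt (a * τ + b * (1 - τ))) := by
    rw [Real.sqrt_mul h0.le]
    have h12 : Real.sqrt (1/2) = (Real.sqrt 2)⁻¹ := by
      rw [show (1:ℝ)/2 = 2⁻¹ by norm_num, Real.sqrt_inv]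
    have e1 : (a * τ + b/2) * Real.sqrt (a * τ + b/2)
        ≤ (a * τ + b * (1 - τ)) * Real.sqrt (a * τ + b * (1 - τ)) :=
      mul_le_mul hPl (Real.sqrt_le_sqrt hPl) (Real.sqrt_nonneg _) hQ.le
    calc Real.sqrt τ * ((a * τ + b/2) * Real.sqrt (a * τ + b/2)) / Real.sqrt 2
        = (Real.sqrt τ * (Real.sqrt 2)⁻¹) * ((a * τ + b/2) * Real.sqrt (a * τ + b/2)) := by ring
      _ ≤ (Real.sqrt τ * Real.sqrt (1 - τ)) *
            ((a * τ + b * (1 - τ)) * Real.sqrt (a * τ + b * (1 - τ))) := by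
          apply mul_le_mul _ e1 (by positivity) (by positivity)
          rw [← h12]
          exact mul_le_mul_of_nonneg_left hs2 (Real.sqrt_nonneg _)
  have hpos : 0 < Real.sqrt τ * ((a * τ + b/2) * Real.sqrt (a * τ + b/2)) / Real.sqrt 2 := by
    positivity
  unfold fK
  calc (Real.sqrt (τ * (1 - τ)) * ((a * τ + b * (1 - τ)) * Real.sqrt (a * τ + b * (1 - τ))))⁻¹
      ≤ (Real.sqrt τ * ((a * τ + b/2) * Real.sqrt (a * τ + b/2)) / Real.sqrt 2)⁻¹ :=
        inv_anti₀ hpos key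
    _ = Real.sqrt 2 * (Real.sqrt τ * ((a * τ + b/2) * Real.sqrt (a * τ + b/2)))⁻¹ := by
        rw [div_eq_mul_inv, mul_inv, inv_inv, mul_comm]

lemma fK_int_half (a b : ℝ) (ha : 0 < a) (hb : 0 < b) :
    IntervalIntegrable (fK a b) volume 0 (1/2) := by
  have hint : IntervalIntegrable
      (fun τ : ℝ => (Real.sqrt 2 * ((b/2) * Real.sqrt (b/2))⁻¹) * τ ^ (-(1/2) : ℝ))
      volume 0 (1/2) :=
    (intervalIntegrable_rpow' (by norm_num)).const_mul _
  refine hint.mono_fun' ((fK_meas a b).aestronglyMeasurable.restrict) ?_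
  rw [uIoc_of_le (by norm_num : (0:ℝ) ≤ 1/2)]
  filter_upwards [ae_restrict_mem measurableSet_Ioc] with τ hτ
  obtain ⟨h0, h1⟩ := hτ
  have hfk0 : 0 ≤ fK a b τ := fK_nonneg a b τ ha hb ⟨h0.le, by linarith⟩
  have h2 := fK_le a b τ ha hb h0 h1
  rw [Real.norm_eq_abs, abs_of_nonneg hfk0]
  refine h2.trans ?_
  have hrw : τ ^ (-(1/2) : ℝ) = (Real.sqrt τ)⁻¹ := by
    rw [Real.rpow_neg h0.le, ← Real.sqrt_eq_rpow]
  rw [hrw]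
  have hP : 0 < a * τ + b/2 := by positivity
  have hmono : (b/2) * Real.sqrt (b/2) ≤ (a * τ + b/2) * Real.sqrt (a * τ + b/2) := by
    have h3 : (b:ℝ)/2 ≤ a * τ + b/2 := by nlinarith
    exact mul_le_mul h3 (Real.sqrt_le_sqrt h3) (Real.sqrt_nonneg _) hP.le
  have h4 : ((a * τ + b/2) * Real.sqrt (a * τ + b/2))⁻¹ ≤ ((b/2) * Real.sqrt (b/2))⁻¹ :=
    inv_anti₀ (by positivity) hmono
  calc Real.sqrt 2 * (Real.sqrt τ * ((a * τ + b/2) * Real.sqrt (a * τ + b/2)))⁻¹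
      = Real.sqrt 2 * (((a * τ + b/2) * Real.sqrt (a * τ + b/2))⁻¹ * (Real.sqrt τ)⁻¹) := by
        rw [mul_inv]; ring
    _ ≤ Real.sqrt 2 * (((b/2) * Real.sqrt (b/2))⁻¹ * (Real.sqrt τ)⁻¹) := by
        apply mul_le_mul_of_nonneg_left _ (Real.sqrt_nonneg 2)
        exact mul_le_mul_of_nonneg_right h4 (by positivity)
    _ = Real.sqrt 2 * ((b/2) * Real.sqrt (b/2))⁻¹ * (Real.sqrt τ)⁻¹ := by ring

lemma fK_integral_half (a b : ℝ) (ha : 0 < a) (hb : 0 < b) :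
    ∫ τ in (0:ℝ)..(1/2), fK a b τ ≤ 6 / (b * Real.sqrt a) := by
  set g : ℝ → ℝ := fun s => Real.sqrt 2 * (2 * Real.sqrt s / ((b/2) * Real.sqrt (a * s + b/2)))
    with hg
  have hcont : ContinuousOn g (Icc 0 (1/2)) := by
    apply ContinuousOn.mul continuousOn_const
    apply ContinuousOn.div
    · exact (continuous_const.mul Real.continuous_sqrt).continuousOn
    · exact (continuous_const.mul ((continuous_const.mul continuous_id').add
        continuous_const).sqrt).continuousOn
    · intro x hx
      have : 0 < a * x + b/2 := by nlinarith [hx.1]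
      positivity
  have hderiv : ∀ x ∈ Ioo (0:ℝ) (1/2), HasDerivWithinAt g
      (Real.sqrt 2 * (Real.sqrt x * ((a * x + b/2) * Real.sqrt (a * x + b/2)))⁻¹) (Ioi x) x := by
    intro x hx
    exact ((hasDerivAt_F a (b/2) x ha (by positivity) hx.1).const_mul
      (Real.sqrt 2)).hasDerivWithinAt
  have hbound := integral_le_sub_of_hasDeriv_right_of_le (by norm_num : (0:ℝ) ≤ 1/2) hcont hderiv
    ((intervalIntegrable_iff_integrableOn_Icc_of_le (by norm_num)).1 (fK_int_half a b ha hb))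
    (fun x hx => fK_le a b x ha hb hx.1 hx.2.le)
  have hg0 : g 0 = 0 := by simp [hg]
  refine hbound.trans ?_
  rw [hg0, sub_zero, hg]
  have hu : (0:ℝ) < Real.sqrt (1/2) := by positivity
  have hsa : (0:ℝ) < Real.sqrt a := Real.sqrt_pos.2 ha
  have hden : Real.sqrt a * Real.sqrt (1/2) ≤ Real.sqrt (a * (1/2) + b/2) := by
    rw [← Real.sqrt_mul ha.le]
    exact Real.sqrt_le_sqrt (by linarith)
  have hsqrt2 : Real.sqrt 2 ≤ 3/2 := by
    nlinarith [Real.sq_sqrt (by norm_num : (0:ℝ) ≤ 2), Real.sqrt_nonneg 2]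
  calc Real.sqrt 2 * (2 * Real.sqrt (1/2) / ((b/2) * Real.sqrt (a * (1/2) + b/2)))
      = (Real.sqrt 2 * (2 * Real.sqrt (1/2))) / ((b/2) * Real.sqrt (a * (1/2) + b/2)) := by
        ring
    _ ≤ (Real.sqrt 2 * (2 * Real.sqrt (1/2))) / ((b/2) * (Real.sqrt a * Real.sqrt (1/2))) := by
        apply div_le_div_of_nonneg_left (by positivity) (by positivity)
        exact mul_le_mul_of_nonneg_left hden (by positivity)
    _ ≤ 6 / (b * Real.sqrt a) := by
        rw [div_le_div_iff₀ (by positivity) (by positivity)]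
        nlinarith [mul_le_mul_of_nonneg_right hsqrt2
          (le_of_lt (by positivity : (0:ℝ) < Real.sqrt (1/2) * (b * Real.sqrt a)))]

lemma fK_symm (a b : ℝ) : (fun τ => fK a b (1 - τ)) = fK b a := by
  funext τ
  unfold fK
  rw [show (1-τ)*(1-(1-τ)) = τ*(1-τ) by ring,
    show a*(1-τ)+b*(1-(1-τ)) = b*τ+a*(1-τ) by ring]

lemma fK_int_half2 (a b : ℝ) (ha : 0 < a) (hb : 0 < b) :
    IntervalIntegrable (fK a b) volume (1/2) 1 := by
  have h := (fK_int_half b a hb ha).comp_sub_left 1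
  rw [fK_symm b a] at h
  norm_num at h
  exact h.symm

lemma fK_int_whole (a b : ℝ) (ha : 0 < a) (hb : 0 < b) :
    IntervalIntegrable (fK a b) volume 0 1 :=
  (fK_int_half a b ha hb).trans (fK_int_half2 a b ha hb)

lemma fK_integral_whole (a b : ℝ) (ha : 0 < a) (hb : 0 < b) :
    ∫ τ in (0:ℝ)..1, fK a b τ ≤ 6 / (b * Real.sqrt a) + 6 / (a * Real.sqrt b) := by
  rw [← integral_add_adjacent_intervals (fK_int_half a b ha hb) (fK_int_half2 a b ha hb)]
  apply add_le_add (fK_integral_half a b ha hb)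
  have he : (∫ x in (0:ℝ)..(1/2), fK a b (1 - x)) = ∫ x in (1/2:ℝ)..1, fK a b x := by
    have h := integral_comp_sub_left (a := (0:ℝ)) (b := 1/2) (fK a b) 1
    rw [show (1:ℝ)-1/2 = 1/2 by norm_num, show (1:ℝ)-0 = 1 by norm_num] at h
    exact h
  rw [← he, fK_symm a b]
  exact fK_integral_half b a hb ha

end Stmt11Aux

open Stmt11Aux MeasureTheory Set in
/-- bound for the `λ`-derivative of the kernel `K₂`. -/
theorem stmt11 :
    ∃ C : ℝ, 0 < C ∧ ∀ r t l : ℝ, 0 < r → 0 < t → |t - r| < l → l < t + r →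
      0 < l + r - t →
      (∫ τ in (0:ℝ)..1, |deriv (fun l' => K2 l' τ r t) l|)
        ≤ C / (Real.sqrt (r * l) * (l + r - t)) := by
  refine ⟨10, by norm_num, ?_⟩
  intro r t l hr ht hl1 hl2 hl3
  have hl0 : 0 < l := lt_of_le_of_lt (abs_nonneg _) hl1
  obtain ⟨hlr1, hlr2⟩ := abs_lt.mp hl1
  set a : ℝ := (l+r-t)*(l+r+t) with ha_def
  set b : ℝ := 4*(r*l) with hb_def
  have ha : 0 < a := mul_pos hl3 (by linarith)
  have hb : 0 < b := by rw [hb_def]; positivity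
  have hab : a ≤ b := by
    rw [ha_def, hb_def]
    nlinarith [mul_pos (show (0:ℝ) < t-(l-r) by linarith) (show (0:ℝ) < t+(l-r) by linarith)]
  set D : ℝ → ℝ := fun τ =>
    -(2*π*((τ*(1-τ)*(4*r+2*τ*(l-r))) /
        (2*Real.sqrt (τ*(1-τ)*(a*τ+b*(1-τ)))))) /
      (2*π*Real.sqrt (τ*(1-τ)*(a*τ+b*(1-τ))))^2 with hD_def
  have hDmeas : Measurable D := by rw [hD_def]; fun_prop
  -- the derivative formula on [0,1]
  have main : ∀ τ ∈ Icc (0:ℝ) 1, deriv (fun l' => K2 l' τ r t) l = D τ := by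
    rintro τ ⟨hτ0, hτ1⟩
    rcases eq_or_lt_of_le hτ0 with h0 | h0
    · have hzero : (fun l' => K2 l' τ r t) = fun _ => 0 := by
        funext x
        simp [K2, ← h0]
      rw [hzero, deriv_const, hD_def]
      simp [← h0]
    rcases eq_or_lt_of_le hτ1 with h1 | h1
    · have hzero : (fun l' => K2 l' τ r t) = fun _ => 0 := by
        funext x
        simp [K2, h1]
      rw [hzero, deriv_const, hD_def]
      simp [h1]
    -- interior case
    have hτ1' : 0 < 1 - τ := by linarith
    set G : ℝ → ℝ := fun l' => τ*(1-τ)*(4*r*l' - τ*(t^2-(l'-r)^2)) with hGdef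
    have hev : (fun l' => K2 l' τ r t) =ᶠ[nhds l] fun l' => (2*π*Real.sqrt (G l'))⁻¹ := by
      filter_upwards [Ioo_mem_nhds hl1 hl2] with x hx
      obtain ⟨hx1, hx2⟩ := hx
      have hx0 : 0 < x := lt_of_le_of_lt (abs_nonneg _) hx1
      obtain ⟨hxa, hxb⟩ := abs_lt.mp hx1
      have hrx : (0:ℝ) < 2*r*x := by positivity
      have hcos : Real.cos (phiK x r t) = (r^2+x^2-t^2)/(2*r*x) := by
        apply Real.cos_arccos
        · rw [le_div_iff₀ hrx]
          nlinarith [mul_pos (show (0:ℝ) < r+x-t by linarith) (show (0:ℝ) < r+x+t by linarith)]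
        · rw [div_le_one hrx]
          nlinarith [mul_pos (show (0:ℝ) < t-(x-r) by linarith)
            (show (0:ℝ) < t+(x-r) by linarith)]
      unfold K2
      rw [hcos, one_div]
      congr 2
      rw [hGdef]
      field_simp
      ring
    have hGl : G l = τ*(1-τ)*(a*τ+b*(1-τ)) := by
      rw [hGdef, ha_def, hb_def]; ring
    have hP : 0 < a*τ+b*(1-τ) := by
      nlinarith [mul_pos ha h0, mul_pos hb hτ1']
    have hGpos : 0 < G l := by rw [hGl]; positivity
    have hid := hasDerivAt_id l
    have h2d : HasDerivAt (fun x : ℝ => (x-r)^2) (2*(l-r)) l := by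
      simpa using ((hid.sub_const r).fun_pow 2)
    have h3 : HasDerivAt (fun x : ℝ => 4*r*x - τ*(t^2-(x-r)^2)) (4*r + 2*τ*(l-r)) l := by
      have h4 : HasDerivAt (fun x : ℝ => 4*r*x) (4*r) l := by
        simpa using hid.const_mul (4*r)
      have h5 : HasDerivAt (fun x : ℝ => τ*(t^2-(x-r)^2)) (τ*(0-2*(l-r))) l :=
        (((hasDerivAt_const l (t^2)).sub h2d)).const_mul τ
      refine (h4.fun_sub h5).congr_deriv (Eq.symm ?_)
      ring
    have hG' : HasDerivAt G (τ*(1-τ)*(4*r + 2*τ*(l-r))) l := h3.const_mul (τ*(1-τ))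
    have hs : HasDerivAt (fun l' => Real.sqrt (G l'))
        (τ*(1-τ)*(4*r + 2*τ*(l-r)) / (2*Real.sqrt (G l))) l := hG'.sqrt hGpos.ne'
    have hs2 := hs.const_mul (2*π)
    have hne : (2*π*Real.sqrt (G l)) ≠ 0 := by positivity
    have hinv := hs2.fun_inv hne
    rw [hev.deriv_eq, hinv.deriv, hGl, hD_def]
  -- the pointwise bound on [0,1]
  have bound : ∀ τ ∈ Icc (0:ℝ) 1, |D τ| ≤ ((l+r+t)/(2*π)) * fK a b τ := by
    rintro τ ⟨hτ0, hτ1⟩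
    have hMfK : 0 ≤ ((l+r+t)/(2*π)) * fK a b τ := by
      apply mul_nonneg (by positivity)
      exact fK_nonneg a b τ ha hb ⟨hτ0, hτ1⟩
    rcases eq_or_lt_of_le hτ0 with h0 | h0
    · rw [hD_def]
      simp only [← h0]
      norm_num
      exact hMfK.trans_eq (by rw [← h0])
    rcases eq_or_lt_of_le hτ1 with h1 | h1
    · rw [hD_def]
      simp only [h1]
      norm_num
      exact hMfK.trans_eq (by rw [h1])
    have hτ1' : 0 < 1 - τ := by linarith
    have hP : 0 < a*τ+b*(1-τ) := by
      nlinarith [mul_pos ha h0, mul_pos hb hτ1']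
    set P : ℝ := a*τ+b*(1-τ) with hPe
    set u : ℝ := Real.sqrt (τ*(1-τ)) with hue
    set v : ℝ := Real.sqrt P with hve
    have hu : 0 < u := Real.sqrt_pos.2 (by positivity)
    have hv : 0 < v := Real.sqrt_pos.2 hP
    have hu2 : u^2 = τ*(1-τ) := Real.sq_sqrt (by positivity)
    have hv2 : v^2 = P := Real.sq_sqrt hP.le
    have hsplit : Real.sqrt (τ*(1-τ)*P) = u*v := by
      rw [hue, hve, ← Real.sqrt_mul (by positivity : (0:ℝ) ≤ τ*(1-τ))]
    have hq : 4*r+2*τ*(l-r) ≤ 2*(l+r+t) := by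
      rcases le_total r l with h | h
      · nlinarith [mul_nonneg (sub_nonneg.2 h) (show (0:ℝ) ≤ 1-τ by linarith)]
      · nlinarith [mul_nonneg (sub_nonneg.2 h) h0.le]
    have hq0 : 0 < 4*r+2*τ*(l-r) := by
      rcases le_total r l with h | h
      · nlinarith [mul_nonneg h0.le (sub_nonneg.2 h)]
      · nlinarith [mul_nonneg (show (0:ℝ) ≤ 1-τ by linarith) (sub_nonneg.2 h)]
    have hfk : fK a b τ = (u*(P*v))⁻¹ := by
      unfold fK
      rw [← hPe, ← hue, ← hve]
    have e0 : D τ = -((4*r+2*τ*(l-r)) / (4*π*(u*(P*v)))) := by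
      rw [hD_def]
      simp only
      rw [hsplit]
      have hπ : (0:ℝ) < π := Real.pi_pos
      rw [show (2*π*(u*v))^2 = 4*π^2*u^2*v^2 by ring, hu2, hv2]
      rw [neg_div, neg_inj, div_eq_div_iff (by positivity) (by positivity)]
      field_simp
    rw [e0, abs_neg, abs_of_pos (by positivity), hfk]
    calc (4*r+2*τ*(l-r)) / (4*π*(u*(P*v)))
        ≤ (2*(l+r+t)) / (4*π*(u*(P*v))) := by gcongr
      _ = ((l+r+t)/(2*π)) * (u*(P*v))⁻¹ := by
          rw [div_eq_mul_inv, div_eq_mul_inv, mul_inv, mul_inv]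
          ring
  -- integrability of the integrand
  have hint_rhs : IntervalIntegrable (fun τ => ((l+r+t)/(2*π)) * fK a b τ) volume 0 1 :=
    (fK_int_whole a b ha hb).const_mul _
  have hint_lhs : IntervalIntegrable (fun τ => |deriv (fun l' => K2 l' τ r t) l|)
      volume 0 1 := by
    refine hint_rhs.mono_fun' ?_ ?_
    · apply (hDmeas.abs.aestronglyMeasurable.restrict).congr
      rw [uIoc_of_le (by norm_num : (0:ℝ) ≤ 1)]
      filter_upwards [ae_restrict_mem measurableSet_Ioc] with τ hτ
      rw [main τ ⟨hτ.1.le, hτ.2⟩]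
    · rw [uIoc_of_le (by norm_num : (0:ℝ) ≤ 1)]
      filter_upwards [ae_restrict_mem measurableSet_Ioc] with τ hτ
      rw [Real.norm_eq_abs, abs_abs, main τ ⟨hτ.1.le, hτ.2⟩]
      exact bound τ ⟨hτ.1.le, hτ.2⟩
  -- put everything together
  have step1 : (∫ τ in (0:ℝ)..1, |deriv (fun l' => K2 l' τ r t) l|)
      ≤ ∫ τ in (0:ℝ)..1, ((l+r+t)/(2*π)) * fK a b τ := by
    apply integral_mono_on (by norm_num) hint_lhs hint_rhs
    intro x hx
    rw [main x hx]
    exact bound x hx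
  have step2 : (∫ τ in (0:ℝ)..1, ((l+r+t)/(2*π)) * fK a b τ)
      ≤ ((l+r+t)/(2*π)) * (6 / (b * Real.sqrt a) + 6 / (a * Real.sqrt b)) := by
    rw [intervalIntegral.integral_const_mul]
    exact mul_le_mul_of_nonneg_left (fK_integral_whole a b ha hb) (by positivity)
  refine step1.trans (step2.trans ?_)
  -- final arithmetic
  have hs : 0 < Real.sqrt (r*l) := Real.sqrt_pos.2 (by positivity)
  have hsa : 0 < Real.sqrt a := Real.sqrt_pos.2 ha
  have hsb : Real.sqrt b = 2*Real.sqrt (r*l) := by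
    rw [hb_def, show (4:ℝ)*(r*l) = 2^2*(r*l) by ring,
      Real.sqrt_mul (by positivity), Real.sqrt_sq (by norm_num)]
  have hsale : Real.sqrt a ≤ 2*Real.sqrt (r*l) := by
    rw [← hsb]; exact Real.sqrt_le_sqrt hab
  have hs2 : Real.sqrt (r*l)^2 = r*l := Real.sq_sqrt (by positivity)
  have hsa2 : Real.sqrt a^2 = a := Real.sq_sqrt ha.le
  have key2 : a * Real.sqrt (r*l) ≤ b * Real.sqrt a := by
    rw [hb_def]
    nlinarith [mul_le_mul_of_nonneg_right hsale
      (le_of_lt (mul_pos hsa hs)), hsa2, hs2]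
  have hterm1 : ((l+r+t)/(2*π)) * (6 / (b * Real.sqrt a))
      ≤ 3/(π*(Real.sqrt (r*l)*(l+r-t))) := by
    rw [div_mul_div_comm, div_le_div_iff₀ (by positivity) (by positivity)]
    rw [ha_def, hb_def] at key2 ⊢
    nlinarith [mul_le_mul_of_nonneg_left key2 (le_of_lt (mul_pos (show (0:ℝ) < 6 by norm_num)
      Real.pi_pos))]
  have hterm2 : ((l+r+t)/(2*π)) * (6 / (a * Real.sqrt b))
      ≤ 3/(2*(π*(Real.sqrt (r*l)*(l+r-t)))) := by
    rw [hsb, ha_def, div_mul_div_comm, div_le_div_iff₀ (by positivity) (by positivity)]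
    apply le_of_eq
    ring
  have hsum := add_le_add hterm1 hterm2
  rw [mul_add]
  refine hsum.trans ?_
  have hX : 0 < Real.sqrt (r*l)*(l+r-t) := mul_pos hs hl3
  have hf1 : 3/(π*(Real.sqrt (r*l)*(l+r-t))) ≤ 5/(Real.sqrt (r*l)*(l+r-t)) := by
    rw [div_le_div_iff₀ (by positivity) hX]
    nlinarith [Real.pi_gt_three, hX, mul_le_mul_of_nonneg_right
      (le_of_lt Real.pi_gt_three) hX.le]
  have hf2 : 3/(2*(π*(Real.sqrt (r*l)*(l+r-t)))) ≤ 5/(Real.sqrt (r*l)*(l+r-t)) := by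
    rw [div_le_div_iff₀ (by positivity) hX]
    nlinarith [Real.pi_gt_three, hX, mul_le_mul_of_nonneg_right
      (le_of_lt Real.pi_gt_three) hX.le]
  refine (add_le_add hf1 hf2).trans ?_
  rw [← add_div]
  norm_num
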